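/- For λ > −1, t ∈ ℝ, integer m ≥ 2 and n ≥ 2, let x_{1,n} be the largest zero of the monic generalised higher order Freud polynomial P_n(x;t,λ). Then for every ε > 0, 0 < x_{1,n} < max_{1 ≤ k ≤ n−1} √( c_n β_k(t;λ) ), where c_n = 4 cos²(π/(n+1)) + ε and β_k(t;λ) are the recurrence coefficients. -/

import Mathlib

open MeasureTheory Real Polynomial Filter

/-- The generalised higher order Freud weight `ω(x;t,λ) = |x|^{2λ+1} exp(t x² − x^{2m})`. -/
noncomputable def freudWeight (m : ℕ) (lam t x : ℝ) : ℝ :=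
  |x| ^ (2 * lam + 1) * Real.exp (t * x ^ 2 - x ^ (2 * m))

/-- A monic real polynomial of positive degree takes positive values beyond any point. -/
lemma exists_eval_pos_of_monic (p : Polynomial ℝ) (hp : p.Monic) (h1 : 1 ≤ p.natDegree)
    (a : ℝ) : ∃ B : ℝ, a < B ∧ 0 < p.eval B := by
  have hdeg : 0 < p.degree := Polynomial.natDegree_pos_iff_degree_pos.mp h1
  have htop : Tendsto (fun x => p.eval x) atTop atTop :=
    Polynomial.tendsto_atTop_of_leadingCoeff_nonneg p hdeg (by simp [hp.leadingCoeff])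
  obtain ⟨B, hB1, hB2⟩ := ((htop.eventually (eventually_gt_atTop 0)).and
    (eventually_gt_atTop a)).exists
  exact ⟨B, hB2, hB1⟩

/-- If all roots of a monic real polynomial are `≤ a`, then it is positive beyond `a`. -/
lemma eval_pos_of_roots_le (p : Polynomial ℝ) (hp : p.Monic)
    (a : ℝ) (h : ∀ r : ℝ, p.IsRoot r → r ≤ a) {x : ℝ} (hx : a < x) : 0 < p.eval x := by
  rcases eq_or_lt_of_le (Nat.zero_le p.natDegree) with hd | hd
  · have : p = 1 := hp.natDegree_eq_zero.mp hd.symm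
    simp [this]
  · by_contra hle
    push_neg at hle
    rcases eq_or_lt_of_le hle with heq | hlt
    · exact absurd (h x heq) (not_le.mpr hx)
    · obtain ⟨B, hB2, hB1⟩ := exists_eval_pos_of_monic p hp hd x
      have hIoo : (0:ℝ) ∈ Set.Ioo (p.eval x) (p.eval B) := ⟨hlt, hB1⟩
      obtain ⟨r, hr1, hr2⟩ := intermediate_value_Ioo hB2.le
        (p.continuous_aeval.continuousOn (s := Set.Icc x B)) hIoo
      exact absurd (h r hr2) (not_le.mpr (lt_trans hx hr1.1))

/-- Part A: the `n`-th polynomial of the recurrence has a largest root, it is positive for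
`n ≥ 2`, and everything is positive beyond it. -/
lemma freud_exists_pos_root (P : ℕ → Polynomial ℝ) (β : ℕ → ℝ)
    (hmonic : ∀ k, (P k).Monic) (hdeg : ∀ k, (P k).natDegree = k)
    (hβpos : ∀ k, 1 ≤ k → 0 < β k)
    (hP0 : P 0 = 1) (hP1 : P 1 = X)
    (hrec : ∀ k, 1 ≤ k → P (k + 1) = X * P k - C (β k) * P (k - 1)) :
    ∀ n, 1 ≤ n → ∃ y : ℝ, 0 ≤ y ∧ (P n).IsRoot y ∧
      (∀ x, y < x → 0 < (P n).eval x) ∧ (∀ x, y ≤ x → 0 < (P (n-1)).eval x) ∧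
      (2 ≤ n → 0 < y) := by
  intro n hn
  induction n, hn using Nat.le_induction with
  | base =>
    refine ⟨0, le_refl 0, by simp [hP1, Polynomial.IsRoot], ?_, ?_, by omega⟩
    · intro x hx; simpa [hP1] using hx
    · intro x _; simp [hP0]
  | succ k hk IH =>
    obtain ⟨y, hy0, hyroot, hPkpos, hPk1pos, _⟩ := IH
    have hβk := hβpos k hk
    have hprev := hPk1pos y le_rfl
    have hneg : (P (k+1)).eval y < 0 := by
      rw [hrec k hk]
      simp only [eval_sub, eval_mul, eval_X, eval_C, hyroot.eq_zero]
      nlinarith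
    obtain ⟨B, hB2, hB1⟩ := exists_eval_pos_of_monic (P (k+1)) (hmonic (k+1))
      (by rw [hdeg]; omega) y
    have hIoo : (0:ℝ) ∈ Set.Ioo ((P (k+1)).eval y) ((P (k+1)).eval B) := ⟨hneg, hB1⟩
    obtain ⟨r, hr1, hr2⟩ := intermediate_value_Ioo hB2.le
      ((P (k+1)).continuous.continuousOn (s := Set.Icc y B)) hIoo
    have hne : P (k+1) ≠ 0 := (hmonic (k+1)).ne_zero
    have hr2' : (P (k+1)).IsRoot r := hr2
    have hFne : ((P (k+1)).roots.toFinset).Nonempty :=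
      ⟨r, by rw [Multiset.mem_toFinset, Polynomial.mem_roots hne]; exact hr2'⟩
    obtain ⟨y', hy'eq⟩ : ∃ y', y' = ((P (k+1)).roots.toFinset).max' hFne := ⟨_, rfl⟩
    have hy'root : (P (k+1)).IsRoot y' := by
      have h := Finset.max'_mem _ hFne
      rw [Multiset.mem_toFinset, Polynomial.mem_roots hne] at h
      rw [hy'eq]; exact h
    have hroots_le : ∀ z : ℝ, (P (k+1)).IsRoot z → z ≤ y' := by
      intro z hz
      rw [hy'eq]
      exact Finset.le_max' _ z (by rw [Multiset.mem_toFinset, Polynomial.mem_roots hne]; exact hz)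
    have hyy' : y < y' := lt_of_lt_of_le hr1.1 (hroots_le r hr2')
    refine ⟨y', le_trans hy0 hyy'.le, hy'root, ?_, ?_, fun _ => lt_of_le_of_lt hy0 hyy'⟩
    · intro x hx
      exact eval_pos_of_roots_le (P (k+1)) (hmonic (k+1)) y' hroots_le hx
    · intro x hx
      have hkk : k + 1 - 1 = k := by omega
      rw [hkk]
      exact hPkpos x (lt_of_lt_of_le hyy' hx)

noncomputable def chainG (θ : ℝ) (k : ℕ) : ℝ :=
  Real.sin (k * θ) / (2 * Real.cos θ * Real.sin (((k : ℝ) + 1) * θ))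

lemma freud_eval_pos_at_large (P : ℕ → Polynomial ℝ) (β : ℕ → ℝ)
    (hP0 : P 0 = 1) (hP1 : P 1 = X)
    (hrec : ∀ k, 1 ≤ k → P (k + 1) = X * P k - C (β k) * P (k - 1))
    (n : ℕ) (hn : 2 ≤ n) (x : ℝ) (hx : 0 < x)
    (hβb : ∀ k, 1 ≤ k → k ≤ n - 1 →
      4 * Real.cos (Real.pi / ((n : ℝ) + 1)) ^ 2 * β k < x ^ 2) :
    0 < (P n).eval x := by
  set θ := Real.pi / ((n : ℝ) + 1) with hθ
  have hn1 : (0:ℝ) < (n : ℝ) + 1 := by positivity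
  have hn2 : (2:ℝ) < (n : ℝ) + 1 := by
    have : (2:ℝ) ≤ (n:ℝ) := by exact_mod_cast hn
    linarith
  have hθpos : 0 < θ := by rw [hθ]; positivity
  have hθlt : θ < Real.pi / 2 := by
    rw [hθ]
    exact div_lt_div_of_pos_left Real.pi_pos (by norm_num) hn2
  have hcos : 0 < Real.cos θ := Real.cos_pos_of_mem_Ioo ⟨by linarith [Real.pi_pos], hθlt⟩
  have hsin : ∀ k : ℕ, 1 ≤ k → k ≤ n → 0 < Real.sin ((k : ℝ) * θ) := by
    intro k hk1 hkn
    apply Real.sin_pos_of_pos_of_lt_pi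
    · have : (1:ℝ) ≤ (k:ℝ) := by exact_mod_cast hk1
      nlinarith
    · have hkr : (k:ℝ) < (n:ℝ) + 1 := by
        have : (k:ℝ) ≤ (n:ℝ) := by exact_mod_cast hkn
        linarith
      calc (k:ℝ) * θ < ((n:ℝ) + 1) * θ := mul_lt_mul_of_pos_right hkr hθpos
        _ = Real.pi := by rw [hθ]; field_simp
  have hpi : ((n:ℝ) + 1) * θ = Real.pi := by rw [hθ]; field_simp
  -- facts about the chain sequence parameters
  have hg0 : chainG θ 0 = 0 := by simp [chainG]
  have hgnn : ∀ k, k ≤ n - 1 → 0 ≤ chainG θ k := by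
    intro k hk
    have hden : 0 < 2 * Real.cos θ * Real.sin (((k:ℝ) + 1) * θ) := by
      have h1 := hsin (k+1) (by omega) (by omega)
      push_cast at h1
      positivity
    apply div_nonneg _ hden.le
    rcases Nat.eq_zero_or_pos k with h | h
    · simp [h]
    · exact (hsin k h (by omega)).le
  have hglt : ∀ k, k ≤ n - 2 → chainG θ k < 1 := by
    intro k hk
    have hden : 0 < 2 * Real.cos θ * Real.sin (((k:ℝ) + 1) * θ) := by
      have h1 := hsin (k+1) (by omega) (by omega)
      push_cast at h1
      positivity
    rw [chainG, div_lt_one hden]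
    have hs2 : 0 < Real.sin (((k:ℝ) + 2) * θ) := by
      have h2 := hsin (k+2) (by omega) (by omega)
      push_cast at h2
      exact h2
    have e1 := Real.sin_add (((k:ℝ)+1)*θ) θ
    have e2 := Real.sin_sub (((k:ℝ)+1)*θ) θ
    rw [show ((k:ℝ)+2)*θ = ((k:ℝ)+1)*θ + θ by ring, e1] at hs2
    rw [show ((k:ℝ))*θ = ((k:ℝ)+1)*θ - θ by ring, e2]
    nlinarith
  have hchain : ∀ k, 1 ≤ k → k ≤ n - 1 →
      (1 - chainG θ (k-1)) * chainG θ k * (4 * Real.cos θ ^ 2) = 1 := by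
    intro k h1 h2
    have hsk : 0 < Real.sin ((k:ℝ)*θ) := hsin k h1 (by omega)
    have hsk1 : 0 < Real.sin (((k:ℝ)+1)*θ) := by
      have := hsin (k+1) (by omega) (by omega)
      push_cast at this
      exact this
    have hid : Real.sin (((k:ℝ)+1)*θ) =
        2*Real.cos θ*Real.sin ((k:ℝ)*θ) - Real.sin (((k:ℝ)-1)*θ) := by
      have e1 := Real.sin_add ((k:ℝ)*θ) θ
      have e2 := Real.sin_sub ((k:ℝ)*θ) θ
      rw [show ((k:ℝ)+1)*θ = (k:ℝ)*θ+θ by ring, e1,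
        show ((k:ℝ)-1)*θ = (k:ℝ)*θ-θ by ring, e2]
      ring
    have hcast : ((k-1:ℕ):ℝ) = (k:ℝ) - 1 := by
      have h := Nat.cast_sub (R := ℝ) h1
      push_cast at h ⊢
      linarith
    rw [chainG, chainG, hcast, show ((k:ℝ)-1+1)*θ = (k:ℝ)*θ by ring]
    rw [hid]
    have hne : 2*Real.cos θ*Real.sin ((k:ℝ)*θ) - Real.sin (((k:ℝ)-1)*θ) ≠ 0 := by
      rw [← hid]; exact hsk1.ne'
    field_simp
    ring
  have hgtop : chainG θ (n-1) = 1 := by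
    have hsn : 0 < Real.sin ((n:ℝ)*θ) := hsin n (by omega) le_rfl
    have hsn1 : 0 < Real.sin (((n:ℝ)-1)*θ) := by
      have := hsin (n-1) (by omega) (by omega)
      have hcast : ((n-1:ℕ):ℝ) = (n:ℝ) - 1 := by
        have h := Nat.cast_sub (R := ℝ) (by omega : 1 ≤ n)
        push_cast at h ⊢
        linarith
      rwa [hcast] at this
    have hid : Real.sin (((n:ℝ)+1)*θ) =
        2*Real.cos θ*Real.sin ((n:ℝ)*θ) - Real.sin (((n:ℝ)-1)*θ) := by
      have e1 := Real.sin_add ((n:ℝ)*θ) θ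
      have e2 := Real.sin_sub ((n:ℝ)*θ) θ
      rw [show ((n:ℝ)+1)*θ = (n:ℝ)*θ+θ by ring, e1,
        show ((n:ℝ)-1)*θ = (n:ℝ)*θ-θ by ring, e2]
      ring
    rw [hpi, Real.sin_pi] at hid
    have hcast : ((n-1:ℕ):ℝ) = (n:ℝ) - 1 := by
      have h := Nat.cast_sub (R := ℝ) (by omega : 1 ≤ n)
      push_cast at h ⊢
      linarith
    rw [chainG, hcast, show ((n:ℝ)-1+1)*θ = (n:ℝ)*θ by ring,
      show 2*Real.cos θ*Real.sin ((n:ℝ)*θ) = Real.sin (((n:ℝ)-1)*θ) by linarith]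
    exact div_self hsn1.ne'
  -- the main induction
  have key : ∀ k, 1 ≤ k → k ≤ n - 1 →
      0 < (P (k-1)).eval x ∧
      (1 - chainG θ (k-1)) * x * ((P (k-1)).eval x) ≤ (P k).eval x := by
    intro k hk1
    induction k, hk1 using Nat.le_induction with
    | base =>
      intro _
      constructor
      · simp [hP0]
      · simp [hg0, hP0, hP1]
    | succ k hk IH =>
      intro hk1n
      obtain ⟨h0, h1⟩ := IH (by omega)
      have hgk1lt : chainG θ (k-1) < 1 := hglt _ (by omega)
      have hPk : 0 < (P k).eval x :=
        lt_of_lt_of_le (mul_pos (mul_pos (sub_pos.mpr hgk1lt) hx) h0) h1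
      have hkk : k + 1 - 1 = k := by omega
      rw [hkk]
      refine ⟨hPk, ?_⟩
      have heval : (P (k+1)).eval x = x * (P k).eval x - β k * (P (k-1)).eval x := by
        rw [hrec k hk]
        simp [eval_sub, eval_mul]
      have hc := hchain k hk (by omega)
      have hg := hgnn k (by omega)
      have hβ := hβb k hk (by omega)
      have c4 : (0:ℝ) < 4 * Real.cos θ ^ 2 := by positivity
      have e3 : β k * ((P (k-1)).eval x) <
          (1 - chainG θ (k-1)) * chainG θ k * x^2 * ((P (k-1)).eval x) := by
        rw [← mul_lt_mul_iff_of_pos_right c4]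
        calc β k * ((P (k-1)).eval x) * (4 * Real.cos θ ^ 2)
            < x^2 * ((P (k-1)).eval x) := by nlinarith
          _ = (1 - chainG θ (k-1)) * chainG θ k * x^2 * ((P (k-1)).eval x)
              * (4 * Real.cos θ ^ 2) := by linear_combination (x^2 * ((P (k-1)).eval x)) * hc.symm
      have e5 : chainG θ k * x * ((1 - chainG θ (k-1)) * x * ((P (k-1)).eval x)) ≤
          chainG θ k * x * ((P k).eval x) :=
        mul_le_mul_of_nonneg_left h1 (mul_nonneg hg hx.le)
      have e6 : β k * ((P (k-1)).eval x) < chainG θ k * x * ((P k).eval x) := by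
        refine lt_of_lt_of_le (lt_of_lt_of_le e3 (le_of_eq ?_)) e5
        ring
      rw [heval]
      nlinarith
  -- conclusion
  obtain ⟨h0, h1⟩ := key (n-1) (by omega) le_rfl
  have hg2 : chainG θ (n-1-1) < 1 := hglt _ (by omega)
  have hPn1 : 0 < (P (n-1)).eval x :=
    lt_of_lt_of_le (mul_pos (mul_pos (sub_pos.mpr hg2) hx) h0) h1
  have hrecn := hrec (n-1) (by omega)
  rw [show n-1+1 = n from by omega] at hrecn
  have heval : (P n).eval x = x * (P (n-1)).eval x - β (n-1) * (P (n-1-1)).eval x := by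
    rw [hrecn]
    simp [eval_sub, eval_mul]
  have hc := hchain (n-1) (by omega) le_rfl
  rw [hgtop, mul_one] at hc
  have hβ := hβb (n-1) (by omega) le_rfl
  have c4 : (0:ℝ) < 4 * Real.cos θ ^ 2 := by positivity
  have e3 : β (n-1) * ((P (n-1-1)).eval x) <
      (1 - chainG θ (n-1-1)) * x^2 * ((P (n-1-1)).eval x) := by
    rw [← mul_lt_mul_iff_of_pos_right c4]
    calc β (n-1) * ((P (n-1-1)).eval x) * (4 * Real.cos θ ^ 2)
        < x^2 * ((P (n-1-1)).eval x) := by nlinarith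
      _ = (1 - chainG θ (n-1-1)) * x^2 * ((P (n-1-1)).eval x) * (4 * Real.cos θ ^ 2) := by
          linear_combination (x^2 * ((P (n-1-1)).eval x)) * hc.symm
  have e5 : x * ((1 - chainG θ (n-1-1)) * x * ((P (n-1-1)).eval x)) ≤
      x * ((P (n-1)).eval x) := mul_le_mul_of_nonneg_left h1 hx.le
  rw [heval]
  nlinarith

theorem largest_zero_bound (m : ℕ) (hm : 2 ≤ m) (lam t : ℝ) (hlam : -1 < lam)
    (P : ℕ → Polynomial ℝ) (β : ℕ → ℝ)
    (hmonic : ∀ k, (P k).Monic) (hdeg : ∀ k, (P k).natDegree = k)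
    (horth : ∀ j k, j ≠ k →
      ∫ x : ℝ, (P j).eval x * (P k).eval x * freudWeight m lam t x = 0)
    (hβpos : ∀ k, 1 ≤ k → 0 < β k)
    (hP0 : P 0 = 1) (hP1 : P 1 = X)
    (hrec : ∀ k, 1 ≤ k → P (k + 1) = X * P k - C (β k) * P (k - 1))
    (n : ℕ) (hn : 2 ≤ n) (x1 : ℝ)
    (hroot : (P n).IsRoot x1) (hmax : ∀ y : ℝ, (P n).IsRoot y → y ≤ x1) :
    ∀ ε : ℝ, 0 < ε →
      0 < x1 ∧
      x1 < (Finset.Icc 1 (n - 1)).sup' (Finset.nonempty_Icc.mpr (by omega))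
        (fun k => Real.sqrt ((4 * Real.cos (Real.pi / ((n : ℝ) + 1)) ^ 2 + ε) * β k)) := by
  intro ε hε
  obtain ⟨y, hy0, hyroot, _, _, hy2⟩ :=
    freud_exists_pos_root P β hmonic hdeg hβpos hP0 hP1 hrec n (by omega)
  have hx1pos : 0 < x1 := lt_of_lt_of_le (hy2 hn) (hmax y hyroot)
  refine ⟨hx1pos, ?_⟩
  by_contra hcon
  push_neg at hcon
  have hβb : ∀ k, 1 ≤ k → k ≤ n - 1 →
      4 * Real.cos (Real.pi / ((n : ℝ) + 1)) ^ 2 * β k < x1 ^ 2 := by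
    intro k h1 h2
    have hmem : k ∈ Finset.Icc 1 (n-1) := Finset.mem_Icc.mpr ⟨h1, h2⟩
    have hle : Real.sqrt ((4 * Real.cos (Real.pi / ((n : ℝ) + 1)) ^ 2 + ε) * β k) ≤ x1 :=
      le_trans (Finset.le_sup' (fun k => Real.sqrt ((4 * Real.cos (Real.pi / ((n : ℝ) + 1)) ^ 2 + ε) * β k)) hmem) hcon
    have hb := hβpos k h1
    have hnn : 0 ≤ (4 * Real.cos (Real.pi / ((n : ℝ) + 1)) ^ 2 + ε) * β k := by positivity
    have hsq : (4 * Real.cos (Real.pi / ((n : ℝ) + 1)) ^ 2 + ε) * β k ≤ x1 ^ 2 := by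
      have h := pow_le_pow_left₀ (Real.sqrt_nonneg _) hle 2
      rwa [Real.sq_sqrt hnn] at h
    nlinarith
  have hpos := freud_eval_pos_at_large P β hP0 hP1 hrec n hn x1 hx1pos hβb
  exact hpos.ne' hroot
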